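/- If π* is the optimal policy of the entropy-regularised MDP, i.e. π*(da|s) = exp(−(Q*(s,a) − V*(s))/τ) μ(da) with Q*(s,a) = c(s,a) + γ ∫ V*(s') P(ds'|s,a), then for every policy π' ∈ Π_μ and initial distribution ρ, V^{π'}_τ(ρ) − V^{π*}_τ(ρ) = (τ/(1−γ)) ∫_S KL(π'(·|s) | π*(·|s)) d^{π'}_ρ(ds). -/

import Mathlib

open MeasureTheory ENNReal

/-- Induced state kernel `P_π(·|s) = ∫_A P(·|s,a) π(da|s)`. -/
noncomputable def stepKernel {S A : Type*} [MeasurableSpace S] [MeasurableSpace A]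
    (P : S → A → Measure S) (pol : S → Measure A) (s : S) : Measure S :=
  (pol s).bind (fun a => P s a)

/-- `n`-fold composition of a state kernel, with `P^0_π(·|s) = δ_s`. -/
noncomputable def iterKernel {S : Type*} [MeasurableSpace S]
    (Pπ : S → Measure S) : ℕ → S → Measure S
  | 0, s => Measure.dirac s
  | (n + 1), s => (Pπ s).bind (iterKernel Pπ n)

/-- Discounted occupancy measure `d^π_ρ = (1-γ) ∑ γ^n ∫ P^n_π(·|s') ρ(ds')`. -/
noncomputable def occMeasure {S : Type*} [MeasurableSpace S]
    (Pπ : S → Measure S) (ρ : Measure S) (γ : ℝ) : Measure S :=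
  ENNReal.ofReal (1 - γ) •
    Measure.sum (fun n : ℕ => (ENNReal.ofReal γ) ^ n • ρ.bind (iterKernel Pπ n))

/-- Real-valued KL divergence `KL(m|m') = ∫ ln(dm/dm') dm`. -/
noncomputable def klReal {A : Type*} [MeasurableSpace A] (m m' : Measure A) : ℝ :=
  ∫ a, llr m m' a ∂m

/-- for the optimal Gibbs policy `π*`,
`V^{π'}_τ(ρ) − V^{π*}_τ(ρ) = (τ/(1−γ)) ∫_S KL(π'(·|s)|π*(·|s)) d^{π'}_ρ(ds)`,
assuming the performance difference lemma. -/
theorem value_gap_eq_kl_against_optimal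
    {S A : Type*} [Fintype S] [MeasurableSpace S] [MeasurableSingletonClass S]
    [MeasurableSpace A]
    (μ : Measure A) [IsProbabilityMeasure μ]
    (P : S → A → Measure S) (hP : ∀ s a, IsProbabilityMeasure (P s a))
    (c : S → A → ℝ) (C : ℝ) (hc : ∀ s a, |c s a| ≤ C)
    (γ τ : ℝ) (hγ0 : 0 ≤ γ) (hγ1 : γ < 1) (hτ : 0 < τ)
    (ρ : Measure S) [IsProbabilityMeasure ρ]
    (V : (S → Measure A) → S → ℝ) (Q : (S → Measure A) → S → A → ℝ)
    -- definition of the Q-function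
    (hQ : ∀ pol s a, Q pol s a = c s a + γ * ∫ s', V pol s' ∂(P s a))
    -- on-policy Bellman equation
    (hBellman : ∀ pol : S → Measure A, (∀ s, IsProbabilityMeasure (pol s)) →
      (∀ s, pol s ≪ μ) → ∀ s,
        V pol s = ∫ a, (Q pol s a + τ * Real.log (((pol s).rnDeriv μ a).toReal)) ∂(pol s))
    -- performance difference lemma
    (hperf : ∀ pol pol' : S → Measure A,
      (∀ s, IsProbabilityMeasure (pol s)) → (∀ s, pol s ≪ μ) →
      (∀ s, IsProbabilityMeasure (pol' s)) → (∀ s, pol' s ≪ μ) →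
      (∫ s, V pol s ∂ρ) - (∫ s, V pol' s ∂ρ)
        = (1 / (1 - γ)) *
            ∫ s, ((∫ a, (Q pol' s a + τ * Real.log (((pol' s).rnDeriv μ a).toReal)) ∂(pol s))
                  - (∫ a, (Q pol' s a + τ * Real.log (((pol' s).rnDeriv μ a).toReal)) ∂(pol' s))
                  + τ * klReal (pol s) (pol' s))
              ∂(occMeasure (stepKernel P pol) ρ γ))
    -- the optimal Gibbs policy
    (πstar : S → Measure A) (hπstarProb : ∀ s, IsProbabilityMeasure (πstar s))
    (hGibbs : ∀ s, πstar s =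
      μ.withDensity fun a => ENNReal.ofReal (Real.exp (-(Q πstar s a - V πstar s) / τ)))
    -- an arbitrary policy in `Π_μ`
    (π' : S → Measure A) (hπ'Prob : ∀ s, IsProbabilityMeasure (π' s))
    (hπ'ac : ∀ s, π' s ≪ μ) :
    (∫ s, V π' s ∂ρ) - (∫ s, V πstar s ∂ρ)
      = (τ / (1 - γ)) *
          ∫ s, klReal (π' s) (πstar s) ∂(occMeasure (stepKernel P π') ρ γ) := by
  classical
  have hπstar_ac : ∀ s, πstar s ≪ μ := fun s => by
    rw [hGibbs s]; exact withDensity_absolutelyContinuous μ _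
  -- a bound on |V πstar|
  set B : ℝ := ∑ s : S, |V πstar s| with hBdef
  have hB0 : 0 ≤ B := Finset.sum_nonneg fun s _ => abs_nonneg _
  have hVB : ∀ s, |V πstar s| ≤ B := fun s =>
    Finset.single_le_sum (f := fun s => |V πstar s|) (fun s _ => abs_nonneg _)
      (Finset.mem_univ s)
  -- bound on |Q πstar s a - V πstar s|
  set M : ℝ := |C| + B + B with hMdef
  have hQb : ∀ s a, |Q πstar s a - V πstar s| ≤ M := by
    intro s a
    have hVmeas : Measurable (V πstar) := measurable_of_countable _
    haveI := hP s a
    have hint : Integrable (V πstar) (P s a) := by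
      refine (integrable_const B).mono' hVmeas.aestronglyMeasurable ?_
      exact Filter.Eventually.of_forall fun x => by simpa using hVB x
    have hIb : |∫ s', V πstar s' ∂(P s a)| ≤ B := by
      have := norm_integral_le_of_norm_le_const (μ := P s a) (f := V πstar) (C := B)
        (Filter.Eventually.of_forall fun x => by simpa using hVB x)
      simpa [measure_univ] using this
    have : |Q πstar s a - V πstar s| ≤ |c s a| + γ * |∫ s', V πstar s' ∂(P s a)|
        + |V πstar s| := by
      rw [hQ πstar s a]
      have h1 : |c s a + γ * ∫ s', V πstar s' ∂(P s a) - V πstar s|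
          ≤ |c s a| + |γ * ∫ s', V πstar s' ∂(P s a)| + |V πstar s| := by
        calc |c s a + γ * ∫ s', V πstar s' ∂(P s a) - V πstar s|
            ≤ |c s a + γ * ∫ s', V πstar s' ∂(P s a)| + |V πstar s| := abs_sub _ _
          _ ≤ |c s a| + |γ * ∫ s', V πstar s' ∂(P s a)| + |V πstar s| := by
              have := abs_add_le (c s a) (γ * ∫ s', V πstar s' ∂(P s a))
              linarith
      simpa [abs_mul, abs_of_nonneg hγ0] using h1
    have hcC : |c s a| ≤ |C| := (hc s a).trans (le_abs_self C)
    have hg : γ * |∫ s', V πstar s' ∂(P s a)| ≤ B := by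
      have h1 : γ * |∫ s', V πstar s' ∂(P s a)| ≤ 1 * |∫ s', V πstar s' ∂(P s a)| :=
        mul_le_mul_of_nonneg_right (le_of_lt hγ1) (abs_nonneg _)
      have h2 : (1 : ℝ) * |∫ s', V πstar s' ∂(P s a)| ≤ B := by
        simpa using hIb
      linarith
    have := hVB s
    rw [hMdef]; linarith
  -- lower bound on the Gibbs density, giving μ ≪ πstar s
  have hμac : ∀ s, μ ≪ πstar s := by
    intro s
    refine Measure.AbsolutelyContinuous.mk fun E hE h0 => ?_
    rw [hGibbs s, withDensity_apply _ hE] at h0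
    have hlow : ENNReal.ofReal (Real.exp (-(M / τ))) * μ E
        ≤ ∫⁻ a in E, ENNReal.ofReal (Real.exp (-(Q πstar s a - V πstar s) / τ)) ∂μ := by
      rw [← setLIntegral_const E (ENNReal.ofReal (Real.exp (-(M / τ))))]
      refine lintegral_mono fun a => ?_
      refine ENNReal.ofReal_le_ofReal (Real.exp_le_exp.mpr ?_)
      have h1 : Q πstar s a - V πstar s ≤ M := (le_abs_self _).trans (hQb s a)
      rw [neg_div]
      exact neg_le_neg ((div_le_div_iff_of_pos_right hτ).mpr h1)
    rw [h0] at hlow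
    have hne : ENNReal.ofReal (Real.exp (-(M / τ))) ≠ 0 := by
      simp [ENNReal.ofReal_eq_zero, not_le, Real.exp_pos]
    have := nonpos_iff_eq_zero.mp hlow
    rcases mul_eq_zero.mp this with h | h
    · exact absurd h hne
    · exact h
  -- key lemma: the Bellman integrand integrates to V πstar s against any policy ≪ μ
  have key : ∀ s (m : Measure A), IsProbabilityMeasure m → m ≪ μ →
      (∫ a, (Q πstar s a + τ * Real.log (((πstar s).rnDeriv μ a).toReal)) ∂m)
        = V πstar s := by
    intro s m hmP hmac
    set v : ℝ := V πstar s with hv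
    set g : A → ℝ≥0∞ := (πstar s).rnDeriv μ with hg
    have hgmeas : Measurable g := Measure.measurable_rnDeriv _ _
    set h : A → ℝ := fun a => Q πstar s a + τ * Real.log ((g a).toReal) with hh
    set f : A → ℝ≥0∞ := fun a => ENNReal.ofReal (Real.exp (-(Q πstar s a - v) / τ))
      with hf
    -- the two densities give the same measure
    have hwd : μ.withDensity f = μ.withDensity g := by
      rw [← hGibbs s]
      exact (Measure.withDensity_rnDeriv_eq _ _ (hπstar_ac s)).symm
    -- rewrite f in terms of h
    have harg : ∀ a, -(Q πstar s a - v) / τ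
        = (v - h a + τ * Real.log ((g a).toReal)) / τ := by
      intro a; simp only [hh]; ring
    by_cases hA : AEStronglyMeasurable h m
    · -- measurable case
      have hmk : StronglyMeasurable (hA.mk h) := hA.stronglyMeasurable_mk
      have hae : h =ᵐ[m] hA.mk h := hA.ae_eq_mk
      set Z : Set A := toMeasurable m {a | ¬ h a = hA.mk h a} with hZ
      have hZmeas : MeasurableSet Z := measurableSet_toMeasurable m _
      have hZ0 : m Z = 0 := by
        rw [hZ, measure_toMeasurable]
        exact ae_iff.mp hae
      set U : Set A := Zᶜ with hUdef
      have hU : MeasurableSet U := hZmeas.compl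
      set ftil : A → ℝ≥0∞ := fun a =>
        ENNReal.ofReal (Real.exp ((v - hA.mk h a + τ * Real.log ((g a).toReal)) / τ))
        with hftil
      have hftilmeas : Measurable ftil := by
        apply Measurable.ennreal_ofReal
        apply Real.measurable_exp.comp
        apply Measurable.div_const
        exact (hmk.measurable.const_sub v).add
          ((Real.measurable_log.comp hgmeas.ennreal_toReal).const_mul τ)
      have h1 : (μ.restrict U).withDensity f = (μ.restrict U).withDensity g := by
        rw [← restrict_withDensity hU, ← restrict_withDensity hU, hwd]
      have h2 : f =ᵐ[μ.restrict U] ftil := by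
        have hZr : (μ.restrict U) Z = 0 := by
          rw [Measure.restrict_apply hZmeas, hUdef]; simp
        refine ae_iff.mpr (measure_mono_null ?_ hZr)
        intro a ha
        simp only [Set.mem_setOf_eq] at ha
        by_contra haZ
        apply ha
        have hhmk : h a = hA.mk h a := by
          by_contra hne
          exact haZ (subset_toMeasurable m _ hne)
        show ENNReal.ofReal (Real.exp (-(Q πstar s a - v) / τ))
            = ENNReal.ofReal (Real.exp ((v - hA.mk h a + τ * Real.log ((g a).toReal)) / τ))
        rw [harg a, hhmk]
      have hres : (μ.restrict U).withDensity ftil = (μ.restrict U).withDensity g := by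
        rw [← withDensity_congr_ae h2]; exact h1
      haveI : SigmaFinite (μ.restrict U) := inferInstance
      have haefg : ftil =ᵐ[μ.restrict U] g :=
        (withDensity_eq_iff_of_sigmaFinite hftilmeas.aemeasurable
          hgmeas.aemeasurable).mp hres
      -- on U, a.e. the measurable modification equals v
      have hmkv : ∀ᵐ a ∂(μ.restrict U), hA.mk h a = v := by
        filter_upwards [haefg] with a ha
        have htoReal : (ftil a).toReal
            = Real.exp ((v - hA.mk h a + τ * Real.log ((g a).toReal)) / τ) := by
          show (ENNReal.ofReal (Real.exp ((v - hA.mk h a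
              + τ * Real.log ((g a).toReal)) / τ))).toReal = _
          exact ENNReal.toReal_ofReal (Real.exp_pos _).le
        have htr : (g a).toReal
            = Real.exp ((v - hA.mk h a + τ * Real.log ((g a).toReal)) / τ) :=
          ((congrArg ENNReal.toReal ha).symm).trans htoReal
        have hL : Real.log ((g a).toReal)
            = (v - hA.mk h a + τ * Real.log ((g a).toReal)) / τ := by
          conv_lhs => rw [htr]
          exact Real.log_exp _
        have := (div_eq_iff hτ.ne').mp hL.symm
        linarith [this]
      -- transfer to m
      have hmmkv : hA.mk h =ᵐ[m] fun _ => v := by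
        have hE0 : MeasurableSet {a | ¬ hA.mk h a = v} :=
          (hmk.measurable (measurableSet_singleton v)).compl
        have hμ0 : μ ({a | ¬ hA.mk h a = v} ∩ U) = 0 := by
          have := ae_iff.mp hmkv
          rwa [Measure.restrict_apply hE0] at this
        have hm0 : m ({a | ¬ hA.mk h a = v} ∩ U) = 0 := hmac hμ0
        have hsub : {a | ¬ hA.mk h a = v} ⊆ ({a | ¬ hA.mk h a = v} ∩ U) ∪ Z := by
          intro a ha
          by_cases haZ : a ∈ Z
          · exact Or.inr haZ
          · exact Or.inl ⟨ha, haZ⟩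
        refine ae_iff.mpr (le_antisymm ?_ zero_le)
        calc m {a | ¬ hA.mk h a = v}
            ≤ m (({a | ¬ hA.mk h a = v} ∩ U) ∪ Z) := measure_mono hsub
          _ ≤ m ({a | ¬ hA.mk h a = v} ∩ U) + m Z := measure_union_le _ _
          _ = 0 := by rw [hm0, hZ0, add_zero]
      calc ∫ a, h a ∂m = ∫ a, hA.mk h a ∂m := integral_congr_ae hae
        _ = ∫ _, v ∂m := integral_congr_ae hmmkv
        _ = v := by simp [measure_univ]
    · -- non-measurable case: both sides are the junk value 0
      have h0 : ∫ a, h a ∂m = 0 :=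
        integral_undef fun hi => hA hi.aestronglyMeasurable
      have hAst : ¬ AEStronglyMeasurable h (πstar s) := fun hs' =>
        hA ((hs'.mono_ac (hμac s)).mono_ac hmac)
      have hst0 : ∫ a, h a ∂(πstar s) = 0 :=
        integral_undef fun hi => hAst hi.aestronglyMeasurable
      have hv0 : v = 0 := by
        have hb := hBellman πstar hπstarProb hπstar_ac s
        rw [← hv] at hb
        rw [hb]
        exact hst0
      rw [h0, hv0]
  -- assemble
  rw [hperf π' πstar hπ'Prob hπ'ac hπstarProb hπstar_ac]
  have hfun : ∀ s,
      ((∫ a, (Q πstar s a + τ * Real.log (((πstar s).rnDeriv μ a).toReal)) ∂(π' s))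
        - (∫ a, (Q πstar s a + τ * Real.log (((πstar s).rnDeriv μ a).toReal)) ∂(πstar s))
        + τ * klReal (π' s) (πstar s))
      = τ * klReal (π' s) (πstar s) := by
    intro s
    rw [key s (π' s) (hπ'Prob s) (hπ'ac s), key s (πstar s) (hπstarProb s) (hπstar_ac s)]
    ring
  rw [integral_congr_ae (Filter.Eventually.of_forall hfun), integral_const_mul]
  ring
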